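/- Let U₁, U₂ be real n × d matrices, and let σ_d(U₂) denote the smallest singular value of U₂ (the square root of the smallest eigenvalue of U₂ᵀU₂). If σ_d(U₂) > 0, then the orthogonal-Procrustes discrepancy satisfies min over O in the d × d real orthogonal group of ‖U₁ − U₂·O‖_F² ≤ (1/(2(√2 − 1)·σ_d(U₂)²)) · ‖U₁·U₁ᵀ − U₂·U₂ᵀ‖_F². -/

import Mathlib

open Matrix

/-- The Frobenius norm of a real matrix. -/
noncomputable def frobNorm {n d : ℕ} (A : Matrix (Fin n) (Fin d) ℝ) : ℝ :=
  Real.sqrt (∑ i, ∑ j, A i j ^ 2)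


lemma psd_diag_nonneg {m : Type*} [Fintype m] [DecidableEq m] {P : Matrix m m ℝ}
    (hP : P.PosSemidef) (i : m) : 0 ≤ P i i := by
  have := hP.dotProduct_mulVec_nonneg (Pi.single i 1)
  simpa [dotProduct, mulVec, Pi.single_apply, Finset.sum_ite_eq, Finset.sum_ite_eq'] using this

lemma psd_trace_nonneg {m : Type*} [Fintype m] [DecidableEq m] {P : Matrix m m ℝ}
    (hP : P.PosSemidef) : 0 ≤ P.trace :=
  Finset.sum_nonneg fun i _ => psd_diag_nonneg hP i

lemma psd_trace_mul_nonneg {m : Type*} [Fintype m] [DecidableEq m] {P Q : Matrix m m ℝ}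
    (hP : P.PosSemidef) (hQ : Q.PosSemidef) : 0 ≤ (P * Q).trace := by
  obtain ⟨k, v, rfl⟩ := Matrix.posSemidef_iff_eq_sum_vecMulVec.mp hQ
  rw [Matrix.mul_sum, trace_sum]
  refine Finset.sum_nonneg fun l _ => ?_
  have := hP.dotProduct_mulVec_nonneg (v l)
  convert this using 1
  simp only [Matrix.trace, Matrix.diag, Matrix.mul_apply, vecMulVec_apply, dotProduct, mulVec,
    star_trivial, Finset.mul_sum]
  rw [Finset.sum_comm]
  congr 1; funext a; congr 1; funext b
  rw [show P b a = P a b by simpa using congrFun (congrFun hP.1 a) b]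
  ring

lemma sub_smul_one_posSemidef {m : Type*} [Fintype m] [DecidableEq m] {A : Matrix m m ℝ}
    (hA : A.IsHermitian) {c : ℝ} (hc : ∀ i, c ≤ hA.eigenvalues i) :
    (A - c • (1 : Matrix m m ℝ)).PosSemidef := by
  have hU : (hA.eigenvectorUnitary : Matrix m m ℝ) * (star hA.eigenvectorUnitary : Matrix m m ℝ) = 1 := by
    exact_mod_cast (Matrix.mem_unitaryGroup_iff).mp hA.eigenvectorUnitary.2
  have key : A - c • (1 : Matrix m m ℝ)
      = (hA.eigenvectorUnitary : Matrix m m ℝ) * diagonal (fun i => hA.eigenvalues i - c)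
        * (star hA.eigenvectorUnitary : Matrix m m ℝ) := by
    conv_lhs => rw [hA.spectral_theorem]
    rw [Unitary.conjStarAlgAut_apply]
    have : diagonal (fun i => hA.eigenvalues i - c)
        = diagonal (RCLike.ofReal ∘ hA.eigenvalues) - c • (1 : Matrix m m ℝ) := by
      ext i j
      by_cases h : i = j <;> simp [h, diagonal, Matrix.one_apply, RCLike.ofReal]
    rw [this, mul_sub, sub_mul, mul_assoc _ _ ((star hA.eigenvectorUnitary : Matrix m m ℝ))]
    congr 1
    rw [mul_smul_comm, smul_mul_assoc, mul_one, hU]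
  rw [key]
  refine (Matrix.PosSemidef.diagonal ?_).mul_mul_conjTranspose_same _
  · intro i; simpa using hc i

lemma exists_max_orth {d : ℕ} (A : Matrix (Fin d) (Fin d) ℝ) :
    ∃ O : Matrix (Fin d) (Fin d) ℝ, Oᵀ * O = 1 ∧
      ∀ W : Matrix (Fin d) (Fin d) ℝ, Wᵀ * W = 1 → (Wᵀ * A).trace ≤ (Oᵀ * A).trace := by
  set C : Set (Matrix (Fin d) (Fin d) ℝ) := {O | Oᵀ * O = 1} with hC
  have hclosed : IsClosed C :=
    isClosed_eq ((continuous_id.matrix_transpose).matrix_mul continuous_id) continuous_const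
  have hsub : C ⊆ Set.univ.pi (fun _ : Fin d => Set.univ.pi fun _ : Fin d => Set.Icc (-1:ℝ) 1) := by
    intro O hO
    have hdiag : ∀ j, ∑ i, O i j ^ 2 = 1 := by
      intro j
      have := congrFun (congrFun hO j) j
      simpa [Matrix.mul_apply, Matrix.one_apply, sq] using this
    intro i _
    intro j _
    have h1 : O i j ^ 2 ≤ 1 := by
      rw [← hdiag j]
      exact Finset.single_le_sum (fun k _ => sq_nonneg (O k j)) (Finset.mem_univ i)
    constructor <;> nlinarith
  have hcomp : IsCompact C :=
    (isCompact_univ_pi fun _ => isCompact_univ_pi fun _ => isCompact_Icc).of_isClosed_subset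
      hclosed hsub
  have hne : C.Nonempty := ⟨1, by simp [hC]⟩
  have hcont : Continuous fun O : Matrix (Fin d) (Fin d) ℝ => (Oᵀ * A).trace :=
    ((continuous_id.matrix_transpose).matrix_mul continuous_const).matrix_trace
  obtain ⟨O, hOC, hmax⟩ := hcomp.exists_isMaxOn hne hcont.continuousOn
  exact ⟨O, hOC, fun W hW => hmax hW⟩

lemma trace_stdBasis_mul {d : ℕ} (p q : Fin d) (B : Matrix (Fin d) (Fin d) ℝ) :
    (Matrix.single p q (1:ℝ) * B).trace = B q p := by
  rw [Matrix.trace]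
  rw [Finset.sum_eq_single p]
  · simp [Matrix.diag]
  · intro a _ ha
    simp [Matrix.diag, Matrix.single_mul_apply_of_ne, ha]
  · simp

lemma transpose_stdBasis {d : ℕ} (p q : Fin d) :
    (Matrix.single p q (1:ℝ))ᵀ = Matrix.single q p 1 := by
  ext a b
  simp [Matrix.single, Matrix.transpose_apply, and_comm]

lemma psd_of_max {d : ℕ} {B : Matrix (Fin d) (Fin d) ℝ}
    (h : ∀ W : Matrix (Fin d) (Fin d) ℝ, Wᵀ * W = 1 → (Wᵀ * B).trace ≤ B.trace) :
    B.PosSemidef := by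
  rw [posSemidef_iff_dotProduct_mulVec]
  constructor
  · -- Hermitian (symmetric)
    rw [Matrix.IsHermitian, conjTranspose_eq_transpose_of_trivial]
    ext i j
    rcases eq_or_ne i j with rfl | hij
    · rfl
    -- rotation family
    set P : Matrix (Fin d) (Fin d) ℝ := Matrix.single i i 1 + Matrix.single j j 1 with hP
    set K : Matrix (Fin d) (Fin d) ℝ := Matrix.single i j 1 - Matrix.single j i 1 with hK
    have hPP : P * P = P := by
      simp [hP, add_mul, mul_add, single_mul_single_same,
        single_mul_single_of_ne, hij, hij.symm]
    have hKK : K * K = -P := by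
      simp [hK, hP, sub_mul, mul_sub, single_mul_single_same,
        single_mul_single_of_ne, hij, hij.symm]
      abel
    have hPK : P * K = K := by
      simp [hP, hK, add_mul, mul_sub, single_mul_single_same,
        single_mul_single_of_ne, hij, hij.symm]
    have hKP : K * P = K := by
      simp [hP, hK, sub_mul, mul_add, single_mul_single_same,
        single_mul_single_of_ne, hij, hij.symm]
      abel
    have hPt : Pᵀ = P := by
      simp [hP, transpose_add, transpose_stdBasis]
    have hKt : Kᵀ = -K := by
      simp [hK, transpose_sub, transpose_stdBasis]
    -- the inequality function
    set α : ℝ := B i i + B j j with hα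
    set β : ℝ := B i j - B j i with hβ
    have key : ∀ θ : ℝ, (Real.cos θ - 1) * α + Real.sin θ * β ≤ 0 := by
      intro θ
      set c : ℝ := Real.cos θ - 1
      set s : ℝ := Real.sin θ
      set W : Matrix (Fin d) (Fin d) ℝ := 1 + c • P + s • K with hW
      have hWo : Wᵀ * W = 1 := by
        have hcs : 2 * c + c * c + s * s = 0 := by
          have := Real.sin_sq_add_cos_sq θ
          simp only [c, s]
          nlinarith
        have : Wᵀ = 1 + c • P - s • K := by
          simp [hW, transpose_add, transpose_smul, hPt, hKt]
          abel
        rw [this, hW]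
        have expand : (1 + c • P - s • K) * (1 + c • P + s • K)
            = 1 + (2*c + c*c + s*s) • P := by
          simp only [add_mul, sub_mul, mul_add, one_mul, mul_one, smul_mul_smul_comm,
            hPP, hKK, hPK, hKP, smul_smul, smul_neg, add_smul, Matrix.mul_smul]
          module
        rw [expand, hcs]
        simp
      have := h W hWo
      have hWt : Wᵀ = 1 + c • P - s • K := by
        simp [hW, transpose_add, transpose_smul, hPt, hKt]
        abel
      have htr : (Wᵀ * B).trace = B.trace + c * α - s * (B j i - B i j) := by
        rw [hWt, sub_mul, add_mul, one_mul, smul_mul_assoc, smul_mul_assoc,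
          trace_sub, trace_add, trace_smul, trace_smul]
        have h1 : (P * B).trace = α := by
          simp [hP, add_mul, trace_add, trace_stdBasis_mul, hα]
        have h2 : (K * B).trace = B j i - B i j := by
          simp [hK, sub_mul, trace_sub, trace_stdBasis_mul]
        rw [h1, h2]
        simp [smul_eq_mul]
      rw [htr] at this
      have : c * α - s * (B j i - B i j) ≤ 0 := by linarith
      calc (Real.cos θ - 1) * α + Real.sin θ * β
          = c * α - s * (B j i - B i j) := by simp [hβ]; ring
        _ ≤ 0 := this
    -- derivative at 0 gives β = 0
    have hderiv : HasDerivAt (fun θ : ℝ => (Real.cos θ - 1) * α + Real.sin θ * β)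
        ((-Real.sin 0) * α + Real.cos 0 * β) 0 := by
      have h1 : HasDerivAt (fun θ : ℝ => (Real.cos θ - 1) * α) ((-Real.sin 0) * α) 0 :=
        ((Real.hasDerivAt_cos 0).sub_const 1).mul_const α
      have h2 : HasDerivAt (fun θ : ℝ => Real.sin θ * β) (Real.cos 0 * β) 0 :=
        (Real.hasDerivAt_sin 0).mul_const β
      exact h1.add h2
    have hmax : IsLocalMax (fun θ : ℝ => (Real.cos θ - 1) * α + Real.sin θ * β) 0 := by
      apply Filter.Eventually.of_forall
      intro θ
      simpa using key θ
    have hβ0 : (-Real.sin 0) * α + Real.cos 0 * β = 0 := hmax.hasDerivAt_eq_zero hderiv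
    have : β = 0 := by simpa using hβ0
    have : B i j = B j i := by rw [hβ] at this; linarith
    simpa [Matrix.transpose_apply] using this.symm
  · -- quadratic form
    intro x
    have key : ∀ y : (Fin d) → ℝ, ∑ k, y k ^ 2 = 1 → 0 ≤ y ⬝ᵥ B *ᵥ y := by
      intro y hy
      set W : Matrix (Fin d) (Fin d) ℝ := 1 - (2:ℝ) • vecMulVec y y with hW
      have hMt : (vecMulVec y y)ᵀ = vecMulVec y y := by
        ext a b; simp [vecMulVec_apply, mul_comm]
      have hMM : vecMulVec y y * vecMulVec y y = vecMulVec y y := by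
        ext a b
        simp only [Matrix.mul_apply, vecMulVec_apply]
        calc ∑ k, y a * y k * (y k * y b) = (∑ k, y k ^2) * (y a * y b) := by
              rw [Finset.sum_mul]; congr 1; funext k; ring
          _ = y a * y b := by rw [hy, one_mul]
      have hWo : Wᵀ * W = 1 := by
        have hWt : Wᵀ = W := by simp [hW, transpose_sub, transpose_smul, hMt]
        rw [hWt, hW]
        simp only [sub_mul, mul_sub, one_mul, mul_one, smul_mul_assoc, mul_smul_comm,
          hMM, smul_smul]
        ext a b
        simp [Matrix.sub_apply, Matrix.smul_apply]
        ring
      have := h W hWo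
      have hWt : Wᵀ = W := by simp [hW, transpose_sub, transpose_smul, hMt]
      have htr : (Wᵀ * B).trace = B.trace - 2 * (y ⬝ᵥ B *ᵥ y) := by
        rw [hWt, hW, sub_mul, one_mul, trace_sub, smul_mul_assoc, trace_smul]
        congr 1
        have : (vecMulVec y y * B).trace = y ⬝ᵥ B *ᵥ y := by
          rw [Matrix.trace]
          simp only [Matrix.diag, Matrix.mul_apply, vecMulVec_apply, dotProduct,
            Matrix.mulVec, dotProduct]
          rw [Finset.sum_comm]
          congr 1; funext k
          rw [Finset.mul_sum]
          congr 1; funext a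
          ring
        rw [this]
        simp
      rw [htr] at this
      linarith
    rcases eq_or_ne x 0 with rfl | hx
    · simp
    · have hnorm : 0 < Real.sqrt (∑ k, x k ^ 2) := by
        apply Real.sqrt_pos.mpr
        have : ∃ k, x k ≠ 0 := by
          by_contra hc
          push_neg at hc
          exact hx (funext hc)
        obtain ⟨k, hk⟩ := this
        have : 0 < x k ^ 2 := by positivity
        have hle : x k ^2 ≤ ∑ m, x m ^2 :=
          Finset.single_le_sum (fun m _ => sq_nonneg (x m)) (Finset.mem_univ k)
        linarith
      set r : ℝ := Real.sqrt (∑ k, x k ^ 2) with hr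
      have hy : ∑ k, (r⁻¹ • x) k ^ 2 = 1 := by
        simp only [Pi.smul_apply, smul_eq_mul, mul_pow]
        rw [← Finset.mul_sum]
        rw [show (r⁻¹)^2 * (∑ k, x k ^2) = (r⁻¹)^2 * r^2 by
          congr 1
          rw [hr, Real.sq_sqrt (Finset.sum_nonneg fun k _ => sq_nonneg (x k))]]
        field_simp
      have := key (r⁻¹ • x) hy
      have hscale : (r⁻¹ • x) ⬝ᵥ B *ᵥ (r⁻¹ • x) = (r⁻¹)^2 * (x ⬝ᵥ B *ᵥ x) := by
        rw [Matrix.mulVec_smul, dotProduct_smul, smul_dotProduct]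
        simp [smul_eq_mul]; ring
      rw [hscale] at this
      have h2 : 0 ≤ x ⬝ᵥ B *ᵥ x := by
        have hrpos : 0 < (r⁻¹)^2 := by positivity
        nlinarith
      simpa using h2


lemma tr_four {n d : ℕ} (P Q R S : Matrix (Fin n) (Fin d) ℝ) :
    ((P * Qᵀ) * (R * Sᵀ)).trace = ((Qᵀ * R) * (Sᵀ * P)).trace := by
  rw [Matrix.mul_assoc, trace_mul_comm]
  simp only [Matrix.mul_assoc]

lemma frob_sq_eq_trace {n d : ℕ} (A : Matrix (Fin n) (Fin d) ℝ) :
    frobNorm A ^ 2 = (Aᵀ * A).trace := by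
  rw [frobNorm, Real.sq_sqrt (by positivity)]
  rw [Matrix.trace, Finset.sum_comm]
  congr 1; funext i
  simp [Matrix.diag, Matrix.mul_apply, sq]

lemma trace_sq_nonneg {n d : ℕ} (A : Matrix (Fin n) (Fin d) ℝ) :
    0 ≤ (Aᵀ * A).trace := by
  rw [← frob_sq_eq_trace]; exact sq_nonneg _

lemma trace_sym_prod {m : ℕ} (D S : Matrix (Fin m) (Fin m) ℝ) (hS : Sᵀ = S) :
    (D * S).trace = ∑ p ∈ Finset.univ ×ˢ Finset.univ, D p.1 p.2 * S p.1 p.2 := by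
  rw [Finset.sum_product]
  simp only [Matrix.trace, Matrix.diag, Matrix.mul_apply]
  congr 1; funext i
  congr 1; funext k
  have : S k i = S i k := by
    calc S k i = Sᵀ i k := rfl
      _ = S i k := by rw [hS]
  rw [this]

lemma trace_cauchy_schwarz {m : ℕ} (D S : Matrix (Fin m) (Fin m) ℝ)
    (hD : Dᵀ = D) (hS : Sᵀ = S) :
    ((D * S).trace) ^ 2 ≤ (D * D).trace * (S * S).trace := by
  rw [trace_sym_prod D S hS, trace_sym_prod D D hD, trace_sym_prod S S hS]
  have h2 : ∑ p ∈ Finset.univ ×ˢ Finset.univ, D p.1 p.2 * D p.1 p.2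
      = ∑ p ∈ Finset.univ ×ˢ (Finset.univ : Finset (Fin m)), (D p.1 p.2) ^ 2 := by
    congr 1; funext p; ring
  have h3 : ∑ p ∈ Finset.univ ×ˢ Finset.univ, S p.1 p.2 * S p.1 p.2
      = ∑ p ∈ Finset.univ ×ˢ (Finset.univ : Finset (Fin m)), (S p.1 p.2) ^ 2 := by
    congr 1; funext p; ring
  rw [h2, h3]
  exact Finset.sum_mul_sq_le_sq_mul_sq _ _ _
lemma num_final (p q t c2 r a b s2 cc trD : ℝ)
    (hp : 0 ≤ p) (hq : 0 ≤ q) (hr : 0 ≤ r) (ha2 : a ^ 2 = p) (hb2 : b ^ 2 = q)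
    (hc2eq : c2 = r - t) (hab : -(a * b) ≤ c2) (hs2 : s2 ^ 2 = 2) (hs2nn : 0 ≤ s2)
    (ht_lb : cc * trD ≤ t) :
    2 * (s2 - 1) * (cc * trD) ≤ p + 2 * t + 2 * q + 4 * c2 := by
  have h1le : 1 ≤ s2 := by nlinarith
  have hs2le : s2 ≤ 2 := by nlinarith
  have e2 : (0:ℝ) ≤ 2 * (s2 - 1) := by linarith
  have key1 : 2 * (s2 - 1) * (cc * trD) ≤ 2 * (s2 - 1) * t :=
    mul_le_mul_of_nonneg_left ht_lb e2
  have hrtab : t - a * b ≤ r := by linarith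
  have k3 : 2 * s2 * (t - a * b) ≤ 2 * s2 * r :=
    mul_le_mul_of_nonneg_left hrtab (by linarith)
  have k4 : (0:ℝ) ≤ (4 - 2 * s2) * r := mul_nonneg (by linarith) hr
  have k5 : (0:ℝ) ≤ p + 2 * q - 2 * s2 * (a * b) := by
    nlinarith [sq_nonneg (a - s2 * b)]
  have key2 : 2 * (s2 - 1) * t ≤ p + 2 * t + 2 * q + 4 * c2 := by nlinarith [k3, k4, k5]
  exact le_trans key1 key2

/-- Perturbation bound for orthogonal Procrustes (Lemma 5.4 in Tu et al. (2016)):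
if the smallest singular value `σ_d(U₂)` (the square root of the smallest eigenvalue of
`U₂ᵀU₂`) is positive, then
`min_{O orthogonal} ‖U₁ − U₂·O‖_F² ≤ ‖U₁U₁ᵀ − U₂U₂ᵀ‖_F² / (2(√2 − 1)·σ_d(U₂)²)`. -/
theorem procrustes_perturbation_bound {n d : ℕ}
    (U₁ U₂ : Matrix (Fin n) (Fin d) ℝ)
    (hM : (U₂ᵀ * U₂).IsHermitian) (σd : ℝ)
    (hσd : σd = Real.sqrt (⨅ i, hM.eigenvalues i)) (hpos : 0 < σd) :
    sInf {x : ℝ | ∃ O : Matrix (Fin d) (Fin d) ℝ, Oᵀ * O = 1 ∧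
        x = frobNorm (U₁ - U₂ * O) ^ 2}
      ≤ 1 / (2 * (Real.sqrt 2 - 1) * σd ^ 2)
          * frobNorm (U₁ * U₁ᵀ - U₂ * U₂ᵀ) ^ 2 := by
  rcases Nat.eq_zero_or_pos d with hd | hd
  · exfalso
    subst hd
    rw [Real.iInf_of_isEmpty, Real.sqrt_zero] at hσd
    rw [hσd] at hpos
    exact lt_irrefl 0 hpos
  haveI : Nonempty (Fin d) := ⟨⟨0, hd⟩⟩
  -- smallest eigenvalue
  set c : ℝ := ⨅ i, hM.eigenvalues i with hc
  have hMpsd : (U₂ᵀ * U₂).PosSemidef := by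
    have := Matrix.posSemidef_conjTranspose_mul_self U₂
    simpa using this
  have hcnn : 0 ≤ c := Real.iInf_nonneg fun i => hMpsd.eigenvalues_nonneg i
  have hσ2 : σd ^ 2 = c := by rw [hσd, Real.sq_sqrt hcnn]
  have hmin : ∀ i, c ≤ hM.eigenvalues i := fun i => ciInf_le (Finite.bddBelow_range _) i
  obtain ⟨O, hO, hmax⟩ := exists_max_orth (U₂ᵀ * U₁)
  have hO' : O * Oᵀ = 1 := mul_eq_one_comm.mp hO
  set X : Matrix (Fin n) (Fin d) ℝ := U₂ * O with hX
  set Δ : Matrix (Fin n) (Fin d) ℝ := U₁ - X with hΔ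
  set B : Matrix (Fin d) (Fin d) ℝ := Xᵀ * U₁ with hBdef
  have hB2 : B = Oᵀ * (U₂ᵀ * U₁) := by
    rw [hBdef, hX, transpose_mul, Matrix.mul_assoc]
  have hBpsd : B.PosSemidef := by
    apply psd_of_max
    intro W hW
    have h1 : (O * W)ᵀ * (O * W) = 1 := by
      rw [transpose_mul, Matrix.mul_assoc, ← Matrix.mul_assoc Oᵀ O W, hO, Matrix.one_mul, hW]
    have h2 := hmax (O * W) h1
    rw [hB2]
    have h3 : (O * W)ᵀ * (U₂ᵀ * U₁) = Wᵀ * (Oᵀ * (U₂ᵀ * U₁)) := by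
      rw [transpose_mul, Matrix.mul_assoc]
    rw [← h3]
    exact h2
  have hBt : Bᵀ = B := by
    have := hBpsd.1
    rwa [Matrix.IsHermitian, conjTranspose_eq_transpose_of_trivial] at this
  set D : Matrix (Fin d) (Fin d) ℝ := Δᵀ * Δ with hD
  set M2 : Matrix (Fin d) (Fin d) ℝ := Xᵀ * X with hM2
  set Ss : Matrix (Fin d) (Fin d) ℝ := Δᵀ * X with hSs
  have hXU : U₁ᵀ * X = B := by
    have h4 : U₁ᵀ * X = (Xᵀ * U₁)ᵀ := by rw [transpose_mul, transpose_transpose]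
    rw [h4, ← hBdef, hBt]
  have hSB : Ss = B - M2 := by
    rw [hSs, hΔ, transpose_sub, Matrix.sub_mul, hXU, hM2]
  have hXΔ : Xᵀ * Δ = Ss := by
    rw [hΔ, Matrix.mul_sub, ← hBdef, ← hM2, hSB]
  have hSt : Ssᵀ = Ss := by
    rw [hSB, transpose_sub, hBt, hM2, transpose_mul, transpose_transpose]
  have hDt : Dᵀ = D := by rw [hD, transpose_mul, transpose_transpose]
  have hDpsd : D.PosSemidef := by
    have := Matrix.posSemidef_conjTranspose_mul_self Δ
    simpa [hD] using this
  -- decomposition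
  have hXXt : X * Xᵀ = U₂ * U₂ᵀ := by
    rw [hX, transpose_mul, Matrix.mul_assoc, ← Matrix.mul_assoc O Oᵀ U₂ᵀ, hO', Matrix.one_mul]
  have hU1 : U₁ = Δ + X := by rw [hΔ]; abel
  have hdecomp : U₁ * U₁ᵀ - U₂ * U₂ᵀ = Δ * Δᵀ + Δ * Xᵀ + X * Δᵀ := by
    rw [← hXXt]
    calc U₁ * U₁ᵀ - X * Xᵀ = (Δ + X) * (Δ + X)ᵀ - X * Xᵀ := by rw [← hU1]
      _ = Δ * Δᵀ + Δ * Xᵀ + X * Δᵀ := by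
          simp only [transpose_add, Matrix.add_mul, Matrix.mul_add]
          abel
  -- trace expansion
  have hF : frobNorm (U₁ * U₁ᵀ - U₂ * U₂ᵀ) ^ 2
      = (D * D).trace + 2 * (M2 * D).trace + 2 * (Ss * Ss).trace + 4 * (D * Ss).trace := by
    rw [frob_sq_eq_trace, hdecomp]
    simp only [transpose_add, transpose_mul, transpose_transpose, Matrix.add_mul,
      Matrix.mul_add, trace_add, tr_four, hXΔ, ← hSs, ← hD, ← hM2]
    rw [trace_mul_comm Ss D, trace_mul_comm D M2]
    ring
  -- scalar quantities
  set p : ℝ := (D * D).trace with hp'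
  set q : ℝ := (Ss * Ss).trace with hq'
  set t : ℝ := (M2 * D).trace with ht'
  set c2 : ℝ := (D * Ss).trace with hc2'
  set r : ℝ := (D * B).trace with hr'
  have hr : 0 ≤ r := psd_trace_mul_nonneg hDpsd hBpsd
  have hc2eq : c2 = r - t := by
    rw [hc2', hSB, Matrix.mul_sub, trace_sub, ← hr', trace_mul_comm D M2, ← ht']
  have hcs : c2 ^ 2 ≤ p * q := trace_cauchy_schwarz D Ss hDt hSt
  have hp : 0 ≤ p := by
    rw [hp']; have h9 := trace_sq_nonneg D; rwa [hDt] at h9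
  have hq : 0 ≤ q := by
    rw [hq']; have h9 := trace_sq_nonneg Ss; rwa [hSt] at h9
  have htrD : 0 ≤ D.trace := trace_sq_nonneg Δ
  -- lower bound on t
  have ht_lb : c * D.trace ≤ t := by
    have h1 := sub_smul_one_posSemidef hM hmin
    have h2 := h1.conjTranspose_mul_mul_same O
    have h3 : Oᴴ * (U₂ᵀ * U₂ - c • 1) * O = M2 - c • 1 := by
      rw [conjTranspose_eq_transpose_of_trivial, Matrix.mul_sub, Matrix.sub_mul, hM2, hX,
        transpose_mul, Matrix.mul_smul, Matrix.smul_mul, Matrix.mul_one, hO]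
      simp only [Matrix.mul_assoc]
    rw [h3] at h2
    have h4 := psd_trace_mul_nonneg h2 hDpsd
    rw [Matrix.sub_mul, trace_sub, Matrix.smul_mul, trace_smul, Matrix.one_mul] at h4
    rw [← ht'] at h4
    simp only [smul_eq_mul] at h4
    linarith
  -- numbers
  set a : ℝ := Real.sqrt p with ha'
  set b : ℝ := Real.sqrt q with hb'
  have ha2 : a ^ 2 = p := Real.sq_sqrt hp
  have hb2 : b ^ 2 = q := Real.sq_sqrt hq
  have hann : 0 ≤ a := Real.sqrt_nonneg p
  have hbnn : 0 ≤ b := Real.sqrt_nonneg q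
  have hab : -(a * b) ≤ c2 := by
    have h5 : |c2| ≤ a * b := by
      have : |c2| = Real.sqrt (c2 ^ 2) := (Real.sqrt_sq_eq_abs c2).symm
      rw [this, ha', hb', ← Real.sqrt_mul hp q]
      exact Real.sqrt_le_sqrt hcs
    linarith [neg_abs_le c2]
  set s2 : ℝ := Real.sqrt 2 with hs2'
  have hs2 : s2 ^ 2 = 2 := Real.sq_sqrt (by norm_num)
  have hs2nn : 0 ≤ s2 := Real.sqrt_nonneg 2
  have h1le : 1 ≤ s2 := by
    rw [hs2', show (1:ℝ) = Real.sqrt 1 from Real.sqrt_one.symm]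
    exact Real.sqrt_le_sqrt (by norm_num)
  have hmain : 2 * (s2 - 1) * (c * D.trace) ≤ frobNorm (U₁ * U₁ᵀ - U₂ * U₂ᵀ) ^ 2 := by
    rw [hF]
    exact num_final p q t c2 r a b s2 c D.trace hp hq hr ha2 hb2 hc2eq hab hs2 hs2nn ht_lb
  -- conclude
  have hden : 0 < 2 * (s2 - 1) * σd ^ 2 := by
    have h6 : 1 < s2 := by
      have : (1:ℝ) < 2 := one_lt_two
      by_contra hcon
      push_neg at hcon
      have : s2 ^ 2 ≤ 1 := by nlinarith [hs2nn]
      rw [hs2] at this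
      linarith
    have h7 : 0 < σd ^ 2 := by positivity
    have h8 : 0 < 2 * (s2 - 1) := by linarith
    positivity
  have hfin : D.trace ≤ 1 / (2 * (s2 - 1) * σd ^ 2) * frobNorm (U₁ * U₁ᵀ - U₂ * U₂ᵀ) ^ 2 := by
    rw [one_div_mul_eq_div]
    rw [le_div_iff₀ hden]
    calc D.trace * (2 * (s2 - 1) * σd ^ 2) = 2 * (s2 - 1) * (c * D.trace) := by
          rw [hσ2]; ring
      _ ≤ _ := hmain
  refine le_trans (csInf_le ?_ ?_) hfin
  · exact ⟨0, fun x ⟨O', _, hx⟩ => hx ▸ sq_nonneg _⟩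
  · exact ⟨O, hO, (frob_sq_eq_trace Δ).symm⟩
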